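/- There exists a T₀ topological space that is injectively core compact but not core compact. -/

import Mathlib

open TopologicalSpace
/-- A topological space is *core compact* if for every point `x` and open set `U ∋ x`
there is an open `V ∋ x` such that every open cover of `U` has a finite subfamily
covering `V`. -/
def CoreCompact (Y : Type*) [TopologicalSpace Y] : Prop :=
  ∀ (x : Y) (U : Set Y), IsOpen U → x ∈ U →
    ∃ V : Set Y, IsOpen V ∧ x ∈ V ∧
      ∀ 𝒰 : Set (Set Y), (∀ W ∈ 𝒰, IsOpen W) → U ⊆ ⋃₀ 𝒰 →
        ∃ F : Finset (Set Y), ↑F ⊆ 𝒰 ∧ V ⊆ ⋃₀ ↑F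


/-- The adherence of a filter: its set of cluster points. -/
def adh {Y : Type*} [TopologicalSpace Y] (F : Filter Y) : Set Y :=
  {y | ClusterPt y F}

/-- The infimum (in the order where a filter is smaller when it is coarser, i.e. has
fewer sets) of a family of filters: the coarsest filter contained in every member,
whose elements are exactly the sets belonging to all members, equivalently the sets
`⋃ᵢ Hᵢ` with `Hᵢ ∈ ℋᵢ`.  In Mathlib's order on filters this is the supremum. -/
def filterInfimum {Y : Type*} (H : Set (Filter Y)) : Filter Y :=
  sSup H

/-- A topological space is *injectively core compact* if for every `x`, every open
`U ∋ x` and every family `ℍ` of filters admitting an injection `θ` of `ℍ` into the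
open supersets of `U` with `adh ℋ ∩ θ ℋ = ∅` for all `ℋ ∈ ℍ`, the point `x` is not a
cluster point of the infimum filter `⋀_{ℋ ∈ ℍ} ℋ`. -/
def InjCoreCompact (Y : Type*) [TopologicalSpace Y] : Prop :=
  ∀ (x : Y) (U : Set Y), IsOpen U → x ∈ U →
    ∀ (H : Set (Filter Y)) (θ : Filter Y → Set Y),
      (∀ F ∈ H, IsOpen (θ F) ∧ U ⊆ θ F) →
      Set.InjOn θ H →
      (∀ F ∈ H, adh F ∩ θ F = ∅) →
      x ∉ adh (filterInfimum H)

open Cardinal Set Filter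

noncomputable section
namespace InjCCCounterexample

abbrev kk : Cardinal := Order.succ Cardinal.continuum

lemma hreg : kk.IsRegular := Cardinal.isRegular_succ Cardinal.aleph0_le_continuum

abbrev Th : Ordinal := kk.ord

abbrev B : Type := Th.ToType

instance : Nonempty B := by
  rw [Ordinal.nonempty_toType_iff]
  exact hreg.ord_pos.ne'

lemma mk_Iio_le (b : B) : #(Set.Iio b) ≤ Cardinal.continuum :=
  Order.lt_succ_iff.1 (Cardinal.mk_Iio_ord_toType b)

lemma mk_Iic_le (b : B) : #(Set.Iic b) ≤ Cardinal.continuum := by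
  rw [← Set.Iio_insert]
  refine le_trans Cardinal.mk_insert_le ?_
  calc #(Set.Iio b) + 1 ≤ Cardinal.continuum + Cardinal.continuum := by
        exact add_le_add (mk_Iio_le b) (le_trans one_le_aleph0 aleph0_le_continuum)
    _ = Cardinal.continuum := Cardinal.add_eq_self aleph0_le_continuum

lemma mk_funs_le (b : B) : #(ℕ → Set.Iic b) ≤ Cardinal.continuum := by
  rw [← Cardinal.power_def]
  calc #(Set.Iic b) ^ #ℕ ≤ Cardinal.continuum ^ (ℵ₀ : Cardinal) := by
        rw [Cardinal.mk_nat]; exact Cardinal.power_le_power_right (mk_Iic_le b)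
    _ = Cardinal.continuum := Cardinal.continuum_power_aleph0

lemma exists_bound {ι : Type} (f : ι → B) (hι : #ι ≤ Cardinal.continuum) :
    ∃ b : B, ∀ i, f i < b := by
  classical
  set e := (Ordinal.ToType.mk : Set.Iio Th ≃o Th.ToType) with he
  set σ : Ordinal := ⨆ i, (e.symm (f i)).1 with hσdef
  have hσ : σ < Th := by
    apply Ordinal.iSup_lt_ord
    · rw [hreg.cof_eq]
      exact lt_of_le_of_lt hι (Order.lt_succ _)
    · intro i; exact (e.symm (f i)).2
  have hσ1 : σ + 1 < Th := by
    have hl : Order.IsSuccLimit Th := Cardinal.isSuccLimit_ord (le_trans Cardinal.aleph0_le_continuum (Order.le_succ _))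
    have := hl.succ_lt hσ
    rwa [← Ordinal.add_one_eq_succ] at this
  refine ⟨e ⟨σ + 1, hσ1⟩, fun i => ?_⟩
  have h1 : (e.symm (f i)).1 ≤ σ := Ordinal.le_iSup _ i
  have h2 : e.symm (f i) < (⟨σ + 1, hσ1⟩ : Set.Iio Th) := by
    rw [← Subtype.coe_lt_coe]
    exact lt_of_le_of_lt h1 (lt_add_one σ)
  calc f i = e (e.symm (f i)) := (e.apply_symm_apply _).symm
    _ < e ⟨σ + 1, hσ1⟩ := by exact e.strictMono h2

/-- The space. -/
abbrev X : Type := Option (B × ℕ)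

/-- Openness predicate. -/
def IsOp (S : Set X) : Prop :=
  (∀ (γ : B) (j j' : ℕ), some (γ, j) ∈ S → j' ≤ j → some (γ, j') ∈ S) ∧
  (∀ (γ γ' : B) (j : ℕ), some (γ, j) ∈ S → γ ≤ γ' → some (γ', j) ∈ S) ∧
  (none ∈ S → ∃ β : B, ∀ γ : B, β ≤ γ → ∀ j : ℕ, some (γ, j) ∈ S)

instance tX : TopologicalSpace X where
  IsOpen := IsOp
  isOpen_univ := ⟨fun _ _ _ _ _ => trivial, fun _ _ _ _ _ => trivial,
    fun _ => ⟨Classical.arbitrary B, fun _ _ _ => trivial⟩⟩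
  isOpen_inter := by
    rintro S T ⟨hS1, hS2, hS3⟩ ⟨hT1, hT2, hT3⟩
    refine ⟨fun γ j j' h hj => ⟨hS1 γ j j' h.1 hj, hT1 γ j j' h.2 hj⟩,
      fun γ γ' j h hγ => ⟨hS2 γ γ' j h.1 hγ, hT2 γ γ' j h.2 hγ⟩, fun h => ?_⟩
    obtain ⟨β1, hβ1⟩ := hS3 h.1
    obtain ⟨β2, hβ2⟩ := hT3 h.2
    exact ⟨max β1 β2, fun γ hγ j =>
      ⟨hβ1 γ (le_trans (le_max_left _ _) hγ) j, hβ2 γ (le_trans (le_max_right _ _) hγ) j⟩⟩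
  isOpen_sUnion := by
    intro 𝒮 h
    refine ⟨?_, ?_, ?_⟩
    · rintro γ j j' ⟨s, hs, hmem⟩ hj
      exact ⟨s, hs, (h s hs).1 γ j j' hmem hj⟩
    · rintro γ γ' j ⟨s, hs, hmem⟩ hγ
      exact ⟨s, hs, (h s hs).2.1 γ γ' j hmem hγ⟩
    · rintro ⟨s, hs, hmem⟩
      obtain ⟨β, hβ⟩ := (h s hs).2.2 hmem
      exact ⟨β, fun γ hγ j => ⟨s, hs, hβ γ hγ j⟩⟩

lemma isOpen_iff {S : Set X} : IsOpen S ↔ IsOp S := Iff.rfl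

/-- minimal neighbourhood of a block point -/
def Q (γ₀ : B) (j₀ : ℕ) : Set X := {q | ∃ γ j, q = some (γ, j) ∧ γ₀ ≤ γ ∧ j ≤ j₀}

lemma Q_open (γ₀ : B) (j₀ : ℕ) : IsOpen (Q γ₀ j₀) := by
  rw [isOpen_iff]
  refine ⟨?_, ?_, ?_⟩
  · rintro γ j j' ⟨γ1, j1, heq, h1, h2⟩ hj
    obtain ⟨h3, h4⟩ : γ = γ1 ∧ j = j1 := by simpa using heq
    subst h3; subst h4
    exact ⟨γ, j', rfl, h1, le_trans hj h2⟩
  · rintro γ γ' j ⟨γ1, j1, heq, h1, h2⟩ hγ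
    obtain ⟨h3, h4⟩ : γ = γ1 ∧ j = j1 := by simpa using heq
    subst h3; subst h4
    exact ⟨γ', j, rfl, le_trans h1 hγ, h2⟩
  · rintro ⟨γ1, j1, heq, -, -⟩
    exact absurd heq (by simp)

lemma mem_Q_self (γ₀ : B) (j₀ : ℕ) : (some (γ₀, j₀) : X) ∈ Q γ₀ j₀ :=
  ⟨γ₀, j₀, rfl, le_refl _, le_refl _⟩

lemma Q_subset {γ₀ : B} {j₀ : ℕ} {S : Set X} (hS : IsOpen S)
    (hmem : (some (γ₀, j₀) : X) ∈ S) : Q γ₀ j₀ ⊆ S := by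
  rw [isOpen_iff] at hS
  rintro q ⟨γ, j, rfl, h1, h2⟩
  exact hS.1 γ j₀ j (hS.2.1 γ₀ γ j₀ hmem h1) h2

theorem hT0 : T0Space X := by
  rw [t0Space_iff_inseparable]
  rintro (_ | ⟨γ, j⟩) (_ | ⟨δ, i⟩) h
  · rfl
  · have := (h.mem_open_iff (Q_open δ i)).2 (mem_Q_self δ i)
    obtain ⟨γ1, j1, heq, -, -⟩ := this
    exact absurd heq (by simp)
  · have := (h.mem_open_iff (Q_open γ j)).1 (mem_Q_self γ j)
    obtain ⟨γ1, j1, heq, -, -⟩ := this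
    exact absurd heq (by simp)
  · have h1 := (h.mem_open_iff (Q_open γ j)).1 (mem_Q_self γ j)
    have h2 := (h.mem_open_iff (Q_open δ i)).2 (mem_Q_self δ i)
    obtain ⟨γ1, j1, heq1, ha1, ha2⟩ := h1
    obtain ⟨h3, h4⟩ : δ = γ1 ∧ i = j1 := by simpa using heq1
    subst h3; subst h4
    obtain ⟨γ2, j2, heq2, hb1, hb2⟩ := h2
    obtain ⟨h5, h6⟩ : γ = γ2 ∧ j = j2 := by simpa using heq2
    subst h5; subst h6
    have : γ = δ := le_antisymm ha1 hb1
    have hji : j = i := le_antisymm hb2 ha2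
    subst this; subst hji; rfl


/-! ### Not core compact -/

theorem hNotCC : ¬ CoreCompact X := by
  classical
  intro h
  obtain ⟨V, hV, hxV, hcov⟩ := h none Set.univ isOpen_univ (Set.mem_univ _)
  obtain ⟨β, hβ⟩ := (isOpen_iff.1 hV).2.2 hxV
  -- the cover
  set M : ℕ → Set X := fun n =>
    {q | q = none ∨ ∃ γ j, q = some (γ, j) ∧ (j < n ∨ β < γ)} with hM
  have hMopen : ∀ W ∈ Set.range M, IsOpen W := by
    rintro W ⟨n, rfl⟩
    rw [isOpen_iff]
    refine ⟨?_, ?_, ?_⟩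
    · rintro γ j j' (hc | ⟨γ1, j1, heq, hc⟩) hj
      · exact absurd hc (by simp)
      · obtain ⟨h3, h4⟩ : γ = γ1 ∧ j = j1 := by simpa using heq
        subst h3; subst h4
        refine Or.inr ⟨γ, j', rfl, ?_⟩
        rcases hc with hc | hc
        · exact Or.inl (lt_of_le_of_lt hj hc)
        · exact Or.inr hc
    · rintro γ γ' j (hc | ⟨γ1, j1, heq, hc⟩) hγ
      · exact absurd hc (by simp)
      · obtain ⟨h3, h4⟩ : γ = γ1 ∧ j = j1 := by simpa using heq
        subst h3; subst h4
        refine Or.inr ⟨γ', j, rfl, ?_⟩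
        rcases hc with hc | hc
        · exact Or.inl hc
        · exact Or.inr (lt_of_lt_of_le hc hγ)
    · intro _
      obtain ⟨b, hb⟩ := exists_bound (fun _ : Unit => β) (by
        simpa using le_trans (le_of_lt (Cardinal.nat_lt_continuum 1)) le_rfl)
      exact ⟨b, fun γ hγ j => Or.inr ⟨γ, j, rfl, Or.inr (lt_of_lt_of_le (hb ()) hγ)⟩⟩
  have hcover : Set.univ ⊆ ⋃₀ Set.range M := by
    rintro (_ | ⟨γ, j⟩) -
    · exact ⟨M 0, ⟨0, rfl⟩, Or.inl rfl⟩
    · exact ⟨M (j + 1), ⟨j + 1, rfl⟩, Or.inr ⟨γ, j, rfl, Or.inl (Nat.lt_succ_self j)⟩⟩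
  obtain ⟨G, hG1, hG2⟩ := hcov (Set.range M) hMopen hcover
  set k : Set X → ℕ := fun W => if h : ∃ n, M n = W then h.choose else 0 with hk
  set n₀ : ℕ := G.sup k with hn₀
  have hq : (some (β, n₀) : X) ∈ V := hβ β (le_refl _) n₀
  obtain ⟨W, hWG, hqW⟩ := hG2 hq
  have hWG' : W ∈ G := hWG
  have hWr : ∃ n, M n = W := Set.mem_range.1 (hG1 hWG)
  have hkW : W = M (k W) := by
    rw [hk]; simp only [dif_pos hWr]; exact hWr.choose_spec.symm
  rw [hkW] at hqW
  rcases hqW with hc | ⟨γ1, j1, heq, hc⟩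
  · exact absurd hc (by simp)
  · obtain ⟨h3, h4⟩ : β = γ1 ∧ n₀ = j1 := by simpa using heq
    subst h3; subst h4
    rcases hc with hc | hc
    · exact absurd hc (not_lt_of_ge (Finset.le_sup hWG'))
    · exact lt_irrefl _ hc

/-! ### Injectively core compact -/

/-- From admissibility, each filter is "dodged" at any point of `U`. -/
lemma dodge {x : X} {U : Set X} (hxU : x ∈ U) {F : Filter X} {θF : Set X}
    (hsub : U ⊆ θF) (hdis : adh F ∩ θF = ∅) :
    ∃ O A, IsOpen O ∧ x ∈ O ∧ A ∈ F ∧ O ∩ A = ∅ := by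
  have hx : ¬ ClusterPt x F := by
    intro hcl
    have : x ∈ adh F ∩ θF := ⟨hcl, hsub hxU⟩
    rw [hdis] at this
    exact this
  have hbot : nhds x ⊓ F = ⊥ := by
    rw [← Filter.not_neBot]
    exact hx
  obtain ⟨N, hN, A, hA, hNA⟩ := Filter.inf_eq_bot_iff.1 hbot
  obtain ⟨O, hON, hO, hxO⟩ := mem_nhds_iff.1 hN
  refine ⟨O, A, hO, hxO, hA, ?_⟩
  apply Set.eq_empty_of_subset_empty
  rw [← hNA]
  exact Set.inter_subset_inter_left _ hON

lemma not_clusterPt_of_witness {x : X} {G : Filter X} {N A : Set X}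
    (hN : N ∈ nhds x) (hA : A ∈ G) (hdis : N ∩ A = ∅) : ¬ ClusterPt x G := by
  intro hcl
  have hmem : N ∩ A ∈ nhds x ⊓ G :=
    Filter.inter_mem (Filter.mem_inf_of_left hN) (Filter.mem_inf_of_right hA)
  rw [hdis] at hmem
  exact (hcl.ne (Filter.empty_mem_iff_bot.1 hmem))

theorem hInjCC : InjCoreCompact X := by
  classical
  intro x U hU hxU H θ hθ hInj hadh
  intro hx
  have hx' : ClusterPt x (filterInfimum H) := hx
  -- dodge data for every F ∈ H
  have key : ∀ F ∈ H, ∃ O A, IsOpen O ∧ x ∈ O ∧ A ∈ F ∧ O ∩ A = ∅ := fun F hF =>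
    dodge hxU (hθ F hF).2 (hadh F hF)
  choose! O A hO hxO hAF hOA using key
  -- the common union
  set Astar : Set X := ⋃ F ∈ H, A F with hAstar
  have hAmem : Astar ∈ filterInfimum H := by
    rw [filterInfimum, Filter.mem_sSup]
    intro F hF
    exact Filter.mem_of_superset (hAF F hF) (Set.subset_biUnion_of_mem hF)
  -- case on x
  match x, hxU, hxO with
  | some (γ₀, j₀), hxU, hxO =>
    have hdis : Q γ₀ j₀ ∩ Astar = ∅ := by
      apply Set.eq_empty_of_subset_empty
      rintro q ⟨hq1, hq2⟩
      simp only [hAstar, Set.mem_iUnion] at hq2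
      obtain ⟨F, hF, hqA⟩ := hq2
      have : q ∈ O F ∩ A F := ⟨Q_subset (hO F hF) (hxO F hF) hq1, hqA⟩
      rw [hOA F hF] at this
      exact this
    exact not_clusterPt_of_witness ((Q_open γ₀ j₀).mem_nhds (mem_Q_self γ₀ j₀)) hAmem hdis hx'
  | none, hxU, hxO =>
    -- witness for U
    obtain ⟨βU, hβU⟩ := (isOpen_iff.1 hU).2.2 hxU
    -- witnesses for the dodging opens
    have keyβ : ∀ F ∈ H, ∃ β : B, ∀ γ : B, β ≤ γ → ∀ j : ℕ, some (γ, j) ∈ O F := by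
      intro F hF
      exact (isOpen_iff.1 (hO F hF)).2.2 (hxO F hF)
    choose! βf hβf using keyβ
    -- the injection into (ℕ → Iic βU)
    have hwf : WellFounded ((· < ·) : B → B → Prop) := IsWellFounded.wf
    set S : Filter X → ℕ → Set B := fun F k => insert βU {γ : B | (some (γ, k) : X) ∈ θ F}
      with hSdef
    have hSne : ∀ F k, (S F k).Nonempty := fun F k => ⟨βU, Set.mem_insert _ _⟩
    set c : Filter X → ℕ → B := fun F k => hwf.min (S F k) (hSne F k) with hc
    have hcle : ∀ F k, c F k ≤ βU := by
      intro F k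
      exact le_of_not_gt (hwf.not_lt_min _ (Set.mem_insert _ _))
    have hSeq : ∀ F ∈ H, ∀ k, S F k = {γ : B | (some (γ, k) : X) ∈ θ F} := by
      intro F hF k
      apply Set.insert_eq_self.2
      exact (hθ F hF).2 (hβU βU (le_refl _) k)
    have hchar : ∀ F ∈ H, ∀ (γ : B) (k : ℕ),
        (some (γ, k) : X) ∈ θ F ↔ c F k ≤ γ := by
      intro F hF γ k
      constructor
      · intro hmem
        refine le_of_not_gt (hwf.not_lt_min _ ?_)
        rw [hSeq F hF k]; exact hmem
      · intro hle
        have hmin : c F k ∈ S F k := hwf.min_mem _ _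
        rw [hSeq F hF k] at hmin
        exact (isOpen_iff.1 (hθ F hF).1).2.1 _ γ k hmin hle
    have hinj2 : Set.InjOn (fun F => (fun k => (⟨c F k, hcle F k⟩ : Set.Iic βU))) H := by
      intro F hF G hG heq
      apply hInj hF hG
      have hceq : ∀ k, c F k = c G k := by
        intro k
        exact congrArg Subtype.val (congrFun heq k)
      ext q
      match q with
      | none =>
        constructor
        · intro _; exact (hθ G hG).2 hxU
        · intro _; exact (hθ F hF).2 hxU
      | some (γ, k) =>
        rw [hchar F hF γ k, hchar G hG γ k, hceq k]
    -- cardinality of H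
    have hcard : #(↥H) ≤ Cardinal.continuum := by
      have hle : #(↥H) ≤ #(ℕ → Set.Iic βU) := by
        apply Cardinal.mk_le_of_injective (f := fun F : ↥H =>
          (fun k => (⟨c F.1 k, hcle F.1 k⟩ : Set.Iic βU)))
        intro F G hFG
        exact Subtype.ext (hinj2 F.2 G.2 hFG)
      exact le_trans hle (mk_funs_le βU)
    -- a bound for the dodging witnesses
    obtain ⟨b, hb⟩ := exists_bound (fun F : ↥H => βf F.1) hcard
    -- the witness neighbourhood
    set Nstar : Set X := {q : X | q = none ∨ ∃ γ j, q = some (γ, j) ∧ b ≤ γ} with hNstar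
    have hNopen : IsOpen Nstar := by
      rw [isOpen_iff]
      refine ⟨?_, ?_, fun _ => ⟨b, fun γ hγ j => Or.inr ⟨γ, j, rfl, hγ⟩⟩⟩
      · rintro γ j j' (hc | ⟨γ1, j1, heq, hc⟩) hj
        · exact absurd hc (by simp)
        · obtain ⟨h3, h4⟩ : γ = γ1 ∧ j = j1 := by simpa using heq
          subst h3; subst h4
          exact Or.inr ⟨γ, j', rfl, hc⟩
      · rintro γ γ' j (hc | ⟨γ1, j1, heq, hc⟩) hγ
        · exact absurd hc (by simp)
        · obtain ⟨h3, h4⟩ : γ = γ1 ∧ j = j1 := by simpa using heq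
          subst h3; subst h4
          exact Or.inr ⟨γ', j, rfl, le_trans hc hγ⟩
    have hxN : (none : X) ∈ Nstar := Or.inl rfl
    have hdis : Nstar ∩ Astar = ∅ := by
      apply Set.eq_empty_of_subset_empty
      rintro q ⟨hq1, hq2⟩
      simp only [hAstar, Set.mem_iUnion] at hq2
      obtain ⟨F, hF, hqA⟩ := hq2
      have hqO : q ∈ O F := by
        rcases hq1 with hc | ⟨γ, j, rfl, hc⟩
        · rw [hc]; exact hxO F hF
        · exact hβf F hF γ (le_of_lt (lt_of_lt_of_le (hb ⟨F, hF⟩) hc)) j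
      have : q ∈ O F ∩ A F := ⟨hqO, hqA⟩
      rw [hOA F hF] at this
      exact this
    exact not_clusterPt_of_witness (hNopen.mem_nhds hxN) hAmem hdis hx'

end InjCCCounterexample
end

/-- There exists a T₀ topological space that is injectively core compact but not
core compact. -/
theorem exists_t0_injCoreCompact_not_coreCompact :
    ∃ (X : Type) (t : TopologicalSpace X),
      @T0Space X t ∧ @InjCoreCompact X t ∧ ¬ @CoreCompact X t :=
  ⟨InjCCCounterexample.X, InjCCCounterexample.tX,
    InjCCCounterexample.hT0, InjCCCounterexample.hInjCC, InjCCCounterexample.hNotCC⟩
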